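/- Let (γ_k) be defined by γ_0=0, γ_1=1, γ_{k+1}=rγ_k − γ_{k−1}, and similarly (γ'_k) for parameter r'. If for some integer k one has γ_k = γ'_k, γ_{k+1} = γ'_{k+1}, and γ_k γ_{k+1} ≠ 0, then r = r'. -/

import Mathlib

lemma cheb_inv (r : ℂ) (γ : ℤ → ℂ)
    (h0 : γ 0 = 0) (h1 : γ 1 = 1)
    (hrec : ∀ k : ℤ, γ (k + 1) = r * γ k - γ (k - 1)) :
    ∀ k : ℤ, γ (k + 1) ^ 2 + γ k ^ 2 - r * γ k * γ (k + 1) = 1 := by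
  intro k
  induction k using Int.induction_on with
  | zero => simp [h0, h1]
  | succ n ih =>
      have h := hrec (n + 1)
      simp only [add_sub_cancel_right] at h
      rw [h]
      linear_combination ih
  | pred n ih =>
      have h := hrec (-n)
      have hγ : γ (-(n : ℤ) - 1) = r * γ (-n) - γ (-n + 1) := by
        linear_combination h
      rw [show (-(n : ℤ) - 1 + 1) = -(n : ℤ) by ring, hγ]
      linear_combination ih

theorem stmt_14 (r r' : ℂ) (γ γ' : ℤ → ℂ)
    (h0 : γ 0 = 0) (h1 : γ 1 = 1)
    (hrec : ∀ k : ℤ, γ (k + 1) = r * γ k - γ (k - 1))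
    (h0' : γ' 0 = 0) (h1' : γ' 1 = 1)
    (hrec' : ∀ k : ℤ, γ' (k + 1) = r' * γ' k - γ' (k - 1))
    (k : ℤ) (hk : γ k = γ' k) (hk1 : γ (k + 1) = γ' (k + 1))
    (hne : γ k * γ (k + 1) ≠ 0) :
    r = r' := by
  have A := cheb_inv r γ h0 h1 hrec k
  have B := cheb_inv r' γ' h0' h1' hrec' k
  rw [hk, hk1] at A hne
  have hmul : (r - r') * (γ' k * γ' (k + 1)) = 0 := by linear_combination B - A
  rcases mul_eq_zero.mp hmul with h | h
  · exact sub_eq_zero.mp h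
  · exact absurd h hne
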